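/- There is a constant C such that for all r ∈ (0, 1/10), |1 + cos(r)·log tan(r/2) − log(e·r/2)| ≤ C·r²·|log r|. -/
import Mathlib


/- STATEMENT 10: There is C such that for all r ∈ (0, 1/10),
|1 + cos(r)·log tan(r/2) − log(e·r/2)| ≤ C·r²·|log r|. -/

noncomputable section
open Real Set

theorem statement10 :
    ∃ C : ℝ, ∀ r ∈ Set.Ioo (0:ℝ) (1/10),
      |1 + Real.cos r * Real.log (Real.tan (r / 2)) -
        Real.log (Real.exp 1 * r / 2)| ≤ C * r ^ 2 * |Real.log r| := by
  use 2
  rintro r ⟨hr0, hr1⟩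
  set x := r / 2 with hxdef
  have hx0 : 0 < x := by positivity
  have hx : x < 1/20 := by rw [hxdef]; linarith
  clear_value x
  have hpi : (3:ℝ) < π := by
    have := Real.pi_gt_d6
    linarith
  have hxpi : x < π / 2 := by linarith
  have hcospos : 0 < Real.cos x := Real.cos_pos_of_mem_Ioo ⟨by linarith, hxpi⟩
  have htanpos : 0 < Real.tan x := Real.tan_pos_of_pos_of_lt_pi_div_two hx0 hxpi
  have hlt : x < Real.tan x := Real.lt_tan hx0 hxpi
  have hcoslb : 1 - x ^ 2 / 2 ≤ Real.cos x := Real.one_sub_sq_div_two_le_cos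
  have hsin : Real.sin x < x := Real.sin_lt hx0
  have htanub : Real.tan x ≤ x * (1 + x ^ 2) := by
    rw [Real.tan_eq_sin_div_cos, div_le_iff₀ hcospos]
    have step1 : x * (1 + x ^ 2) * (1 - x ^ 2 / 2) ≤ x * (1 + x ^ 2) * Real.cos x :=
      mul_le_mul_of_nonneg_left hcoslb (by positivity)
    have hx1 : x ^ 2 ≤ 1 := by nlinarith
    have step2 : (0:ℝ) ≤ x ^ 3 * (1 - x ^ 2) := mul_nonneg (by positivity) (by linarith)
    linarith [step1, hsin, step2]
  have htanlt1 : Real.tan x < 1 := by nlinarith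
  set L := Real.log (Real.tan x) with hL
  clear_value L
  have hA : Real.log x ≤ L := by rw [hL]; exact Real.log_le_log hx0 hlt.le
  have hB : L ≤ Real.log x + x ^ 2 := by
    have h1 : L - Real.log x = Real.log (Real.tan x / x) := by
      rw [hL, Real.log_div htanpos.ne' hx0.ne']
    have h2 : Real.log (Real.tan x / x) ≤ Real.tan x / x - 1 :=
      Real.log_le_sub_one_of_pos (by positivity)
    have h3 : Real.tan x / x ≤ 1 + x ^ 2 := by
      rw [div_le_iff₀ hx0]; nlinarith
    linarith
  have hLneg : L < 0 := by rw [hL]; exact Real.log_neg htanpos htanlt1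
  -- log r estimates
  have hlogr : Real.log r ≤ -1 := by
    have h1 : Real.log r < Real.log (1/10) := Real.log_lt_log hr0 hr1
    have h2 : (1:ℝ) ≤ Real.log 10 := by
      rw [Real.le_log_iff_exp_le (by norm_num)]
      have := Real.exp_one_lt_d9
      linarith
    have h3 : Real.log (1/10) = - Real.log 10 := by
      rw [one_div, Real.log_inv]
    linarith
  have hlog2 : Real.log 2 ≤ 1 := by
    have := Real.log_two_lt_d9
    linarith
  have hlog2pos : 0 < Real.log 2 := Real.log_pos (by norm_num)
  have hlogx : Real.log x = Real.log r - Real.log 2 := by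
    rw [hxdef, Real.log_div hr0.ne' two_ne_zero]
  -- rewrite the expression
  have hrw : 1 + Real.cos r * L - Real.log (Real.exp 1 * r / 2)
      = Real.cos r * L - Real.log x := by
    have : Real.exp 1 * r / 2 = Real.exp 1 * x := by rw [hxdef]; ring
    rw [this, Real.log_mul (Real.exp_ne_zero 1) hx0.ne', Real.log_exp]
    ring
  -- cos r bounds
  have hcr1 : Real.cos r ≤ 1 := Real.cos_le_one r
  have hcr2 : 1 - r ^ 2 / 2 ≤ Real.cos r := Real.one_sub_sq_div_two_le_cos
  -- key bounds
  have h1 : -L ≤ 2 * (-Real.log r) := by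
    have : -L ≤ -Real.log x := by linarith
    rw [hlogx] at this
    linarith
  have h2 : Real.cos r * L ≤ L + (r ^ 2 / 2) * (-L) := by nlinarith
  have h2' : r ^ 2 * (-L) ≤ r ^ 2 * (2 * (-Real.log r)) :=
    mul_le_mul_of_nonneg_left h1 (by positivity)
  have hx2 : x ^ 2 ≤ r ^ 2 * (-Real.log r) := by
    have h4 : r ^ 2 * 1 ≤ r ^ 2 * (-Real.log r) :=
      mul_le_mul_of_nonneg_left (by linarith) (by positivity)
    have : x ^ 2 = r ^ 2 / 4 := by rw [hxdef]; ring
    nlinarith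
  have hEub : Real.cos r * L - Real.log x ≤ 2 * r ^ 2 * (-Real.log r) := by
    linarith [h2, hB, h2', hx2]
  have hElb : 0 ≤ Real.cos r * L - Real.log x := by
    have := mul_nonneg (by linarith : (0:ℝ) ≤ 1 - Real.cos r) (by linarith : (0:ℝ) ≤ -L)
    linarith [this, hA]
  rw [hrw, abs_of_neg (by linarith : Real.log r < 0), abs_of_nonneg hElb]
  linarith
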